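/- Let P be an n×n real matrix with n ≥ 2, and for 1 ≤ i,j ≤ n let P^i_j denote the (n−1)×(n−1) minor of P obtained by deleting the i-th row and j-th column. Suppose det P^1_1 = det P^2_2 = det P^1_2 = det P^2_1 = 0, and suppose that every (n−1)×(n−2) submatrix of P (obtained by deleting one row and two columns) and every (n−2)×(n−1) submatrix of P (obtained by deleting two rows and one column) has full rank n−2. Then det P^i_j = 0 for all 1 ≤ i,j ≤ n, i.e., every (n−1)×(n−1) minor of P has zero determinant. -/
import Mathlib
open Matrix

/-- A matrix with `a+1` columns and rank `a` has a 1-dimensional kernel: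
any two nonzero kernel vectors are proportional. -/
lemma ker_prop {k a : ℕ} (K : Matrix (Fin k) (Fin (a+1)) ℝ) (hK : K.rank = a)
    (c c' : Fin (a+1) → ℝ) (hc : c ≠ 0)
    (h1 : K *ᵥ c = 0) (h2 : K *ᵥ c' = 0) : ∃ t : ℝ, c' = t • c := by
  have hrn := LinearMap.finrank_range_add_finrank_ker K.mulVecLin
  rw [Module.finrank_fin_fun] at hrn
  have hr : Module.finrank ℝ (LinearMap.range K.mulVecLin) = a := hK
  have hker : Module.finrank ℝ (LinearMap.ker K.mulVecLin) = 1 := by omega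
  have hcmem : c ∈ LinearMap.ker K.mulVecLin := by
    simp [LinearMap.mem_ker, Matrix.mulVecLin_apply, h1]
  have hspan : Submodule.span ℝ {c} = LinearMap.ker K.mulVecLin := by
    apply Submodule.eq_of_le_of_finrank_le
    · rwa [Submodule.span_singleton_le_iff_mem]
    · rw [hker, finrank_span_singleton hc]
  have hc'mem : c' ∈ Submodule.span ℝ {c} := by
    rw [hspan]; simp [LinearMap.mem_ker, Matrix.mulVecLin_apply, h2]
  obtain ⟨t, ht⟩ := Submodule.mem_span_singleton.mp hc'mem
  exact ⟨t, ht.symm⟩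

lemma succsucc_eq : ∀ {m : ℕ},
    (fun i : Fin m => i.succ.succ) = Fin.succAbove 0 ∘ Fin.succAbove 0 := by
  intro m; funext i; simp [Fin.succAbove_zero]

lemma succAbove_one_succ {m : ℕ} (i : Fin m) :
    Fin.succAbove (1 : Fin (m+2)) i.succ = i.succ.succ := by
  rw [Fin.succAbove_of_le_castSucc]
  rw [Fin.le_def]
  simp [Fin.lt_def]

/-- Key step: if the minors deleting row 0 and row 1 of an `(m+2)×(m+1)` matrix
are singular, and the submatrix deleting rows 0,1 has rank `m`, then all the
square minors (deleting any single row) are singular. -/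
lemma step {m : ℕ} (A : Matrix (Fin (m+2)) (Fin (m+1)) ℝ)
    (h0 : (A.submatrix (Fin.succAbove 0) id).det = 0)
    (h1 : (A.submatrix (Fin.succAbove 1) id).det = 0)
    (hK : (A.submatrix (fun i : Fin m => i.succ.succ) id).rank = m) :
    ∀ i, (A.submatrix (Fin.succAbove i) id).det = 0 := by
  obtain ⟨c, hc, hc0⟩ := Matrix.exists_mulVec_eq_zero_iff.mpr h0
  obtain ⟨c', hc', hc'0⟩ := Matrix.exists_mulVec_eq_zero_iff.mpr h1
  have hKc : (A.submatrix (fun i : Fin m => i.succ.succ) id) *ᵥ c = 0 := by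
    funext i
    have : ((A.submatrix (fun i : Fin m => i.succ.succ) id) *ᵥ c) i
        = ((A.submatrix (Fin.succAbove 0) id) *ᵥ c) (Fin.succAbove 0 i) := rfl
    rw [this, hc0]; rfl
  have hKc' : (A.submatrix (fun i : Fin m => i.succ.succ) id) *ᵥ c' = 0 := by
    funext i
    have : ((A.submatrix (fun i : Fin m => i.succ.succ) id) *ᵥ c') i
        = ((A.submatrix (Fin.succAbove 1) id) *ᵥ c') i.succ := by
      simp [Matrix.mulVec, Matrix.submatrix, succAbove_one_succ]
    rw [this, hc'0]; rfl
  obtain ⟨t, ht⟩ := ker_prop _ hK c c' hc hKc hKc'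
  have htne : t ≠ 0 := by
    rintro rfl; simp at ht; exact hc' ht
  -- c is annihilated by all rows of A
  have hAc : A *ᵥ c = 0 := by
    funext r
    rcases eq_or_ne r 0 with rfl | hr
    · -- row 0 = succAbove 1 0
      have h00 : (0 : Fin (m+2)) = Fin.succAbove 1 0 := rfl
      have := congrFun hc'0 0
      have h2 : (A *ᵥ c') 0 = 0 := this
      rw [ht] at h2
      have h3 : (A *ᵥ (t • c)) 0 = t * ((A *ᵥ c) 0) := by
        simp [Matrix.mulVec_smul]
      rw [h3] at h2
      have h4 := mul_eq_zero.mp h2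
      show (A *ᵥ c) 0 = (0 : Fin (m+2) → ℝ) 0
      simpa [htne] using h4
    · obtain ⟨k, hk⟩ := Fin.exists_succAbove_eq hr
      have := congrFun hc0 k
      rw [← hk]; exact this
  intro i
  rw [← Matrix.exists_mulVec_eq_zero_iff]
  refine ⟨c, hc, ?_⟩
  funext r
  exact congrFun hAc (Fin.succAbove i r)

/-- here `n = m + 2 ≥ 2`. The minor `P^i_j` (delete row `i`, column `j`)
is `P.submatrix i.succAbove j.succAbove`; rows/columns `1` and `2` of the text are the
indices `0` and `1`. Deleting two columns `j₁, j₂` is parameterized by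
`j₁ : Fin (m+2)` and `j₂ : Fin (m+1)` via `j₁.succAbove ∘ j₂.succAbove`, and
similarly for rows. Full rank of an `(m+1) × m` or `m × (m+1)` submatrix means
rank `m = n - 2`. -/
theorem stmt9 (m : ℕ) (P : Matrix (Fin (m + 2)) (Fin (m + 2)) ℝ)
    (h11 : (P.submatrix (Fin.succAbove 0) (Fin.succAbove 0)).det = 0)
    (h22 : (P.submatrix (Fin.succAbove 1) (Fin.succAbove 1)).det = 0)
    (h12 : (P.submatrix (Fin.succAbove 0) (Fin.succAbove 1)).det = 0)
    (h21 : (P.submatrix (Fin.succAbove 1) (Fin.succAbove 0)).det = 0)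
    (hcols : ∀ (i j₁ : Fin (m + 2)) (j₂ : Fin (m + 1)),
      (P.submatrix (Fin.succAbove i) (Fin.succAbove j₁ ∘ Fin.succAbove j₂)).rank = m)
    (hrows : ∀ (i₁ : Fin (m + 2)) (i₂ : Fin (m + 1)) (j : Fin (m + 2)),
      (P.submatrix (Fin.succAbove i₁ ∘ Fin.succAbove i₂) (Fin.succAbove j)).rank = m) :
    ∀ i j : Fin (m + 2), (P.submatrix (Fin.succAbove i) (Fin.succAbove j)).det = 0 := by
  -- generic column step
  have col : ∀ j : Fin (m+2),
      (P.submatrix (Fin.succAbove 0) (Fin.succAbove j)).det = 0 →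
      (P.submatrix (Fin.succAbove 1) (Fin.succAbove j)).det = 0 →
      ∀ i, (P.submatrix (Fin.succAbove i) (Fin.succAbove j)).det = 0 := by
    intro j hj0 hj1 i
    have := step (P.submatrix id (Fin.succAbove j))
      (by rw [Matrix.submatrix_submatrix]; simpa using hj0)
      (by rw [Matrix.submatrix_submatrix]; simpa using hj1)
      (by rw [Matrix.submatrix_submatrix, succsucc_eq]
          simpa using hrows 0 0 j) i
    rw [Matrix.submatrix_submatrix] at this
    simpa using this
  have hcol0 := col 0 h11 h21
  have hcol1 := col 1 h12 h22
  -- now transpose: for fixed row i, apply step to Pᵀ with column i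
  intro i j
  have hT : ∀ k, (Pᵀ.submatrix (Fin.succAbove k) (Fin.succAbove i)).det =
      (P.submatrix (Fin.succAbove i) (Fin.succAbove k)).det := by
    intro k
    rw [← Matrix.det_transpose, Matrix.transpose_submatrix, Matrix.transpose_transpose]
  have := step (Pᵀ.submatrix id (Fin.succAbove i))
    (by rw [Matrix.submatrix_submatrix]
        simp only [Function.comp_id, Function.id_comp]
        rw [show (Pᵀ.submatrix (Fin.succAbove 0) (Fin.succAbove i)) =
          (P.submatrix (Fin.succAbove i) (Fin.succAbove 0))ᵀ by
            rw [Matrix.transpose_submatrix]]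
        rw [Matrix.det_transpose]; exact hcol0 i)
    (by rw [Matrix.submatrix_submatrix]
        simp only [Function.comp_id, Function.id_comp]
        rw [show (Pᵀ.submatrix (Fin.succAbove 1) (Fin.succAbove i)) =
          (P.submatrix (Fin.succAbove i) (Fin.succAbove 1))ᵀ by
            rw [Matrix.transpose_submatrix]]
        rw [Matrix.det_transpose]; exact hcol1 i)
    (by rw [Matrix.submatrix_submatrix, succsucc_eq]
        simp only [Function.comp_id, Function.id_comp]
        rw [show (Pᵀ.submatrix (Fin.succAbove 0 ∘ Fin.succAbove 0) (Fin.succAbove i)) =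
          (P.submatrix (Fin.succAbove i) (Fin.succAbove 0 ∘ Fin.succAbove 0))ᵀ by
            rw [Matrix.transpose_submatrix]]
        rw [Matrix.rank_transpose]; exact hcols i 0 0) j
  rw [Matrix.submatrix_submatrix] at this
  simp only [Function.comp_id, Function.id_comp] at this
  rw [← hT j]
  exact this
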